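/- Let λ = (q-1)n - qh be an eigenvalue of the Hamming graph H(n,q) with number h, let f : F_q^n → ℂ be a λ-eigenfunction (i.e., ∑_{β: ρ(α,β)=1} f(β) = λ f(α) for all α), let α ∈ F_q^n, and let I ⊆ {1,...,n} with complement Ī. Then the local weight enumerators of f in the orthogonal faces Γ_I(α) and Γ_Ī(α) satisfy (x + (q-1)y)^{h - |Ī|} · g^{Ī,α}_f(x,y) = (x' + (q-1)y')^{h - |I|} · g^{I,α}_f(x',y'), where x' = x + (q-2)y and y' = -y. -/

import Mathlib

open Finset Matrix

noncomputable def xiq (q : ℕ) : ℂ := Complex.exp (2 * Real.pi * Complex.I / q)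

/-- The character `φ^β(α) = ξ^{⟨α,β⟩}` on the q-ary Hamming space. -/
noncomputable def chr (q n : ℕ) [NeZero q] (β α : Fin n → ZMod q) : ℂ :=
  xiq q ^ (∑ i, α i * β i : ZMod q).val

/-- Fourier transform `f̂(α) = ∑_β f(β) conj(ξ^{⟨α,β⟩})`. -/
noncomputable def ftr (q n : ℕ) [NeZero q] (f : (Fin n → ZMod q) → ℂ)
    (α : Fin n → ZMod q) : ℂ :=
  ∑ β : Fin n → ZMod q, f β * (starRingEnd ℂ) (chr q n β α)

/-- The face `Γ_I(α)` of the hypercube. -/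
def face (q n : ℕ) [NeZero q] (I : Finset (Fin n)) (α : Fin n → ZMod q) :
    Finset (Fin n → ZMod q) :=
  Finset.univ.filter (fun β => ∀ i ∉ I, β i = α i)

/-- The support `s(β)` of a vertex. -/
def supp (q n : ℕ) [NeZero q] (β : Fin n → ZMod q) : Finset (Fin n) :=
  Finset.univ.filter (fun i => β i ≠ 0)

/-- Local weight enumerator `g^{I,α}_f(x,y)`. -/
noncomputable def lwe (q n : ℕ) [NeZero q] (f : (Fin n → ZMod q) → ℂ)
    (I : Finset (Fin n)) (α : Fin n → ZMod q) (x y : ℂ) : ℂ :=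
  ∑ β ∈ face q n I α, f β * y ^ hammingDist β α * x ^ (I.card - hammingDist β α)

/-- `f` is an eigenfunction of the Hamming graph `H(n,q)` with eigenvalue `μ`. -/
def IsEigenfun (q n : ℕ) [NeZero q] (f : (Fin n → ZMod q) → ℂ) (μ : ℂ) : Prop :=
  ∀ α, ∑ β ∈ Finset.univ.filter (fun β => hammingDist α β = 1), f β = μ * f α

/-- Adjacency matrix of the Hamming graph `H(n,q)`. -/
noncomputable def adjM (q n : ℕ) [NeZero q] :
    Matrix (Fin n → ZMod q) (Fin n → ZMod q) ℂ :=
  fun α β => if hammingDist α β = 1 then 1 else 0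

/-- Vertex-color incidence matrix of a coloring `c`. -/
noncomputable def colM (q n r : ℕ) [NeZero q] (c : (Fin n → ZMod q) → Fin r) :
    Matrix (Fin n → ZMod q) (Fin r) ℂ :=
  fun α i => if c α = i then 1 else 0

/-! ### Auxiliary lemmas -/

noncomputable def ec (q : ℕ) [NeZero q] (a : ZMod q) : ℂ := xiq q ^ a.val

lemma xiq_pow_q (q : ℕ) [NeZero q] : xiq q ^ q = 1 := by
  have hq : (q:ℂ) ≠ 0 := Nat.cast_ne_zero.2 (NeZero.ne q)
  rw [xiq, ← Complex.exp_nat_mul]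
  have : ((q:ℂ) * (2 * Real.pi * Complex.I / q)) = 2 * Real.pi * Complex.I := by
    field_simp
  rw [this]
  simpa [mul_comm, mul_assoc] using Complex.exp_two_pi_mul_I

lemma ec_zero (q : ℕ) [NeZero q] : ec q 0 = 1 := by
  simp [ec, ZMod.val_zero]

lemma xiq_pow_mod (q : ℕ) [NeZero q] (m : ℕ) : xiq q ^ (m % q) = xiq q ^ m := by
  conv_rhs => rw [← Nat.div_add_mod m q]
  rw [pow_add, pow_mul, xiq_pow_q, one_pow, one_mul]

lemma ec_add (q : ℕ) [NeZero q] (a b : ZMod q) : ec q (a + b) = ec q a * ec q b := by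
  rw [ec, ec, ec, ZMod.val_add, xiq_pow_mod, pow_add]

lemma ec_sum {ι : Type*} (q : ℕ) [NeZero q] (s : Finset ι) (g : ι → ZMod q) :
    ec q (∑ i ∈ s, g i) = ∏ i ∈ s, ec q (g i) := by
  classical
  induction s using Finset.induction_on with
  | empty => simp [ec_zero]
  | insert _ _ h ih => rw [Finset.sum_insert h, Finset.prod_insert h, ec_add, ih]

lemma ec_nsmul (q : ℕ) [NeZero q] (m : ℕ) (a : ZMod q) : ec q (m • a) = ec q a ^ m := by
  induction m with
  | zero => simp [ec_zero]
  | succ k ih => rw [succ_nsmul, ec_add, ih, pow_succ]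

lemma ec_mul_ec_neg (q : ℕ) [NeZero q] (a : ZMod q) : ec q a * ec q (-a) = 1 := by
  rw [← ec_add]; simp [ec_zero]

lemma abs_ec (q : ℕ) [NeZero q] (a : ZMod q) : ‖ec q a‖ = 1 := by
  rw [ec, norm_pow, xiq]
  have : (2 * Real.pi * Complex.I / q : ℂ) = Complex.I * (2 * Real.pi / q : ℝ) := by
    push_cast; ring
  rw [this, Complex.norm_exp, Complex.I_mul_re]
  simp

lemma conj_ec (q : ℕ) [NeZero q] (a : ZMod q) :
    (starRingEnd ℂ) (ec q a) = ec q (-a) := by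
  have h1 := ec_mul_ec_neg q a
  have h2 : (starRingEnd ℂ) (ec q a) * ec q a = 1 := by
    rw [mul_comm, Complex.mul_conj, ← Complex.sq_norm, abs_ec]
    norm_num
  calc (starRingEnd ℂ) (ec q a) = (starRingEnd ℂ) (ec q a) * (ec q a * ec q (-a)) := by
        rw [h1, mul_one]
  _ = ec q (-a) := by rw [← mul_assoc, h2, one_mul]

lemma ec_ne_one (q : ℕ) [NeZero q] (c : ZMod q) (hc : c ≠ 0) : ec q c ≠ 1 := by
  have hprim : IsPrimitiveRoot (xiq q) q := Complex.isPrimitiveRoot_exp q (NeZero.ne q)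
  have h1 : 0 < c.val := by
    rcases Nat.eq_zero_or_pos c.val with h | h
    · exact absurd ((ZMod.val_eq_zero c).1 h) hc
    · exact h
  exact hprim.pow_ne_one_of_pos_of_lt h1.ne' (ZMod.val_lt c)

lemma sum_zmod_val (q : ℕ) [NeZero q] (g : ℕ → ℂ) :
    ∑ t : ZMod q, g t.val = ∑ m ∈ Finset.range q, g m := by
  refine Finset.sum_nbij' (fun t => t.val) (fun m => (m : ZMod q)) ?_ ?_ ?_ ?_ ?_
  · intro t _; exact Finset.mem_range.2 (ZMod.val_lt t)
  · intro m _; exact Finset.mem_univ _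
  · intro t _; simp [ZMod.natCast_val, ZMod.cast_id]
  · intro m hm; exact ZMod.val_cast_of_lt (Finset.mem_range.1 hm)
  · intro t _; rfl

lemma ec_mul_nat (q : ℕ) [NeZero q] (t c : ZMod q) : ec q (t * c) = ec q c ^ t.val := by
  rw [← ec_nsmul]
  congr 1
  rw [nsmul_eq_mul, ZMod.natCast_val, ZMod.cast_id]

lemma ec_pow_card (q : ℕ) [NeZero q] (c : ZMod q) : ec q c ^ q = 1 := by
  rw [← ec_nsmul]
  have : (q : ℕ) • c = 0 := by
    rw [nsmul_eq_mul, ZMod.natCast_self, zero_mul]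
  rw [this, ec_zero]

lemma sum_ec (q : ℕ) [NeZero q] (c : ZMod q) :
    ∑ t : ZMod q, ec q (t * c) = if c = 0 then (q : ℂ) else 0 := by
  by_cases hc : c = 0
  · simp [hc, ec_zero, ZMod.card]
  · simp only [hc, if_false]
    have : ∀ t : ZMod q, ec q (t * c) = ec q c ^ t.val := fun t => ec_mul_nat q t c
    rw [Finset.sum_congr rfl (fun t _ => this t), sum_zmod_val q (fun m => ec q c ^ m)]
    have hgeom := geom_sum_mul (ec q c) q
    rw [ec_pow_card, sub_self] at hgeom
    exact (mul_eq_zero.1 hgeom).resolve_right (sub_ne_zero.2 (ec_ne_one q c hc))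

lemma chr_eq (q n : ℕ) [NeZero q] (β α : Fin n → ZMod q) :
    chr q n β α = ec q (∑ i, α i * β i) := rfl

lemma sum_chr_vec (q n : ℕ) [NeZero q] (δ : Fin n → ZMod q) :
    ∑ γ : Fin n → ZMod q, ec q (∑ i, γ i * δ i) = if δ = 0 then ((q : ℂ)) ^ n else 0 := by
  have key : ∑ γ : Fin n → ZMod q, ec q (∑ i, γ i * δ i)
      = ∏ i : Fin n, ∑ t : ZMod q, ec q (t * δ i) := by
    rw [Finset.prod_univ_sum (fun _ => (Finset.univ : Finset (ZMod q)))
      (fun i t => ec q (t * δ i)), Fintype.piFinset_univ]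
    exact Finset.sum_congr rfl (fun γ _ => ec_sum q _ _)
  rw [key]
  have : ∀ i : Fin n, ∑ t : ZMod q, ec q (t * δ i) = if δ i = 0 then (q:ℂ) else 0 :=
    fun i => sum_ec q (δ i)
  rw [Finset.prod_congr rfl (fun i _ => this i)]
  by_cases hδ : δ = 0
  · simp [hδ]
  · rw [if_neg hδ]
    obtain ⟨i, hi⟩ : ∃ i, δ i ≠ 0 := by
      by_contra hc
      push_neg at hc
      exact hδ (funext hc)
    exact Finset.prod_eq_zero (Finset.mem_univ i) (by rw [if_neg hi])

lemma inversion (q n : ℕ) [NeZero q] (f : (Fin n → ZMod q) → ℂ) (β : Fin n → ZMod q) :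
    ∑ γ : Fin n → ZMod q, ftr q n f γ * chr q n γ β = (q : ℂ) ^ n * f β := by
  simp only [ftr, Finset.sum_mul]
  rw [Finset.sum_comm]
  have step : ∀ β' : Fin n → ZMod q,
      ∑ γ : Fin n → ZMod q, f β' * (starRingEnd ℂ) (chr q n β' γ) * chr q n γ β
        = f β' * (if (fun i => β i - β' i) = 0 then (q:ℂ)^n else 0) := by
    intro β'
    rw [← sum_chr_vec q n (fun i => β i - β' i), Finset.mul_sum]
    refine Finset.sum_congr rfl (fun γ _ => ?_)
    rw [chr_eq, chr_eq, conj_ec, mul_assoc, ← ec_add]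
    congr 2
    rw [Finset.sum_congr rfl (fun i (_ : i ∈ Finset.univ) => mul_sub (γ i) (β i) (β' i)),
      Finset.sum_sub_distrib]
    rw [sub_eq_neg_add]
    congr 1
    exact Finset.sum_congr rfl (fun i _ => mul_comm (β i) (γ i))
  rw [Finset.sum_congr rfl (fun β' _ => step β')]
  have cond : ∀ β' : Fin n → ZMod q, ((fun i => β i - β' i) = 0) ↔ (β' = β) := by
    intro β'
    constructor
    · intro hz; funext i
      have h2 := congrFun hz i
      simp only [Pi.zero_apply, sub_eq_zero] at h2
      exact h2.symm
    · intro hz; funext i; simp [hz]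
  have : ∀ β' : Fin n → ZMod q,
      f β' * (if (fun i => β i - β' i) = 0 then (q:ℂ)^n else 0)
        = if β' = β then f β' * (q:ℂ)^n else 0 := by
    intro β'
    by_cases hb : β' = β
    · rw [if_pos ((cond β').2 hb), if_pos hb]
    · rw [if_neg (fun hz => hb ((cond β').1 hz)), if_neg hb, mul_zero]
  rw [Finset.sum_congr rfl (fun β' _ => this β'), Finset.sum_ite_eq' Finset.univ β
    (fun β' => f β' * (q:ℂ)^n), if_pos (Finset.mem_univ β), mul_comm]

lemma sum_chr_neighbors (q n : ℕ) [NeZero q] (γ α : Fin n → ZMod q) :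
    ∑ β ∈ Finset.univ.filter (fun β => hammingDist α β = 1), chr q n γ β
      = (((q : ℂ) - 1) * n - (q : ℂ) * (supp q n γ).card) * chr q n γ α := by
  classical
  -- the neighbours of α are parametrized by (i, t) with t ≠ α i
  have hdist : ∀ (i : Fin n) (t : ZMod q), t ≠ α i →
      hammingDist α (Function.update α i t) = 1 := by
    intro i t ht
    have : (Finset.univ.filter fun j => α j ≠ Function.update α i t j) = {i} := by
      ext j
      by_cases hj : j = i
      · subst hj
        simp only [Finset.mem_filter, Finset.mem_univ, true_and, Finset.mem_singleton,
          Function.update_self]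
        exact iff_of_true (fun h => ht h.symm) trivial
      · simp [Function.update_of_ne hj, hj]
    rw [hammingDist, this, Finset.card_singleton]
  have hterm : ∀ (i : Fin n) (t : ZMod q),
      chr q n γ (Function.update α i t)
        = chr q n γ α * (ec q (t * γ i) * ec q (-(α i * γ i))) := by
    intro i t
    rw [chr_eq, chr_eq, ← ec_add, ← ec_add]
    congr 1
    have hL : ∑ j, Function.update α i t j * γ j
        = t * γ i + ∑ j ∈ Finset.univ.erase i, α j * γ j := by
      rw [← Finset.add_sum_erase _ _ (Finset.mem_univ i), Function.update_self]
      congr 1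
      exact Finset.sum_congr rfl fun j hj => by
        rw [Function.update_of_ne (Finset.mem_erase.1 hj).1]
    have hR : (∑ j, α j * γ j)
        = α i * γ i + ∑ j ∈ Finset.univ.erase i, α j * γ j :=
      (Finset.add_sum_erase _ _ (Finset.mem_univ i)).symm
    rw [hL, hR]
    ring
  have hbij : ∑ β ∈ Finset.univ.filter (fun β => hammingDist α β = 1), chr q n γ β
      = ∑ p ∈ (Finset.univ : Finset (Fin n)).sigma
          (fun i => Finset.univ.erase (α i)), chr q n γ (Function.update α p.1 p.2) := by
    refine (Finset.sum_bij (fun p _ => Function.update α p.1 p.2) ?_ ?_ ?_ ?_).symm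
    · rintro ⟨i, t⟩ hp
      rw [Finset.mem_sigma] at hp
      exact Finset.mem_filter.2 ⟨Finset.mem_univ _,
        hdist i t (Finset.mem_erase.1 hp.2).1⟩
    · rintro ⟨i, t⟩ hp ⟨i', t'⟩ hp' heq
      rw [Finset.mem_sigma, Finset.mem_erase] at hp hp'
      replace heq : Function.update α i t = Function.update α i' t' := heq
      by_cases hii : i = i'
      · subst hii
        have := congrFun heq i
        rw [Function.update_self, Function.update_self] at this
        simp [this]
      · exfalso
        have h1 := congrFun heq i
        rw [Function.update_self, Function.update_of_ne hii] at h1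
        exact hp.2.1 h1
    · intro β hβ
      rw [Finset.mem_filter] at hβ
      obtain ⟨i₀, hi₀⟩ := Finset.card_eq_one.1 hβ.2
      have hmem : i₀ ∈ Finset.univ.filter fun j => α j ≠ β j := by
        rw [hi₀]; exact Finset.mem_singleton_self i₀
      have hne : α i₀ ≠ β i₀ := (Finset.mem_filter.1 hmem).2
      refine ⟨⟨i₀, β i₀⟩, Finset.mem_sigma.2 ⟨Finset.mem_univ _,
        Finset.mem_erase.2 ⟨fun h => hne h.symm, Finset.mem_univ _⟩⟩, ?_⟩
      show Function.update α i₀ (β i₀) = β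
      funext j
      by_cases hj : j = i₀
      · subst hj; rw [Function.update_self]
      · rw [Function.update_of_ne hj]
        by_contra hc
        have : j ∈ Finset.univ.filter fun j => α j ≠ β j :=
          Finset.mem_filter.2 ⟨Finset.mem_univ _, hc⟩
        rw [hi₀, Finset.mem_singleton] at this
        exact hj this
    · intro p _; rfl
  rw [hbij, Finset.sum_sigma]
  have hinner : ∀ i : Fin n,
      ∑ t ∈ Finset.univ.erase (α i), chr q n γ (Function.update α i t)
        = chr q n γ α * ((if γ i = 0 then (q:ℂ) else 0) - 1) := by
    intro i
    have h1 : ∑ t ∈ Finset.univ.erase (α i), chr q n γ (Function.update α i t)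
        = chr q n γ α * ec q (-(α i * γ i)) *
            ∑ t ∈ Finset.univ.erase (α i), ec q (t * γ i) := by
      rw [Finset.mul_sum]
      exact Finset.sum_congr rfl fun t _ => by rw [hterm i t]; ring
    have h2 : ∑ t ∈ Finset.univ.erase (α i), ec q (t * γ i)
        = (if γ i = 0 then (q:ℂ) else 0) - ec q (α i * γ i) := by
      rw [Finset.sum_erase_eq_sub (Finset.mem_univ (α i)), sum_ec]
    rw [h1, h2]
    by_cases hγi : γ i = 0
    · simp only [hγi, if_pos, mul_zero, neg_zero, ec_zero]
      ring
    · simp only [hγi, if_neg, not_false_iff]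
      have := ec_mul_ec_neg q (α i * γ i)
      calc chr q n γ α * ec q (-(α i * γ i)) * (0 - ec q (α i * γ i))
          = chr q n γ α * -(ec q (α i * γ i) * ec q (-(α i * γ i))) := by ring
        _ = chr q n γ α * (0 - 1) := by rw [this]; ring
  rw [Finset.sum_congr rfl fun i _ => hinner i, ← Finset.mul_sum, mul_comm]
  congr 1
  have hw : (supp q n γ).card ≤ n := by
    simpa [supp] using Finset.card_filter_le Finset.univ (fun i => γ i ≠ 0)
  have hcard : (Finset.univ.filter fun i => γ i = 0).card = n - (supp q n γ).card := by
    have h2 := Finset.card_filter_add_card_filter_not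
      (s := (Finset.univ : Finset (Fin n))) (p := fun i => γ i = 0)
    simp only [Finset.card_univ, Fintype.card_fin] at h2
    have hsupp : (Finset.univ.filter fun i => ¬ γ i = 0) = supp q n γ := rfl
    rw [hsupp] at h2
    omega
  rw [Finset.sum_sub_distrib, Finset.sum_ite, Finset.sum_const, Finset.sum_const,
    Finset.sum_const, hcard]
  simp only [nsmul_eq_mul, smul_eq_mul, mul_zero, add_zero, mul_one, Finset.card_univ,
    Fintype.card_fin]
  rw [Nat.cast_sub hw]
  ring

lemma conj_chr (q n : ℕ) [NeZero q] (β γ : Fin n → ZMod q) :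
    (starRingEnd ℂ) (chr q n β γ) = chr q n (-γ) β := by
  rw [chr_eq, chr_eq, conj_ec]
  congr 1
  rw [← Finset.sum_neg_distrib]
  exact Finset.sum_congr rfl fun i _ => by simp [Pi.neg_apply]; ring

lemma supp_neg (q n : ℕ) [NeZero q] (γ : Fin n → ZMod q) :
    supp q n (-γ) = supp q n γ := by
  ext i; simp [supp, Pi.neg_apply, neg_eq_zero]

lemma ftr_vanish (q n : ℕ) [NeZero q] (hq : 2 ≤ q) (h : ℕ)
    (f : (Fin n → ZMod q) → ℂ)
    (hf : IsEigenfun q n f (((q : ℂ) - 1) * n - (q : ℂ) * h))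
    (γ : Fin n → ZMod q) (hγ : (supp q n γ).card ≠ h) : ftr q n f γ = 0 := by
  classical
  set μ : ℂ := ((q : ℂ) - 1) * n - (q : ℂ) * h with hμ
  set ν : ℂ := ((q : ℂ) - 1) * n - (q : ℂ) * (supp q n γ).card with hν
  have key : μ * ftr q n f γ = ν * ftr q n f γ := by
    have lhs : μ * ftr q n f γ
        = ∑ β : Fin n → ZMod q, (μ * f β) * (starRingEnd ℂ) (chr q n β γ) := by
      rw [ftr, Finset.mul_sum]
      exact Finset.sum_congr rfl fun β _ => by ring
    rw [lhs, Finset.sum_congr rfl fun β (_ : β ∈ Finset.univ) => by rw [← hf β]]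
    have l1 : ∀ β : Fin n → ZMod q,
        (∑ b ∈ Finset.univ.filter (fun b => hammingDist β b = 1), f b) *
            (starRingEnd ℂ) (chr q n β γ)
          = ∑ b : Fin n → ZMod q,
              (if hammingDist β b = 1 then f b * (starRingEnd ℂ) (chr q n β γ) else 0) := by
      intro β
      rw [Finset.sum_mul, Finset.sum_filter]
    have l2 : ∀ b : Fin n → ZMod q,
        f b * ∑ a ∈ Finset.univ.filter (fun a => hammingDist b a = 1),
            (starRingEnd ℂ) (chr q n a γ)
          = ∑ a : Fin n → ZMod q,
              (if hammingDist a b = 1 then f b * (starRingEnd ℂ) (chr q n a γ) else 0) := by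
      intro b
      rw [Finset.mul_sum, Finset.sum_filter]
      exact Finset.sum_congr rfl fun a _ => by rw [hammingDist_comm]
    rw [Finset.sum_congr rfl fun β _ => l1 β, Finset.sum_comm]
    rw [Finset.sum_congr rfl fun b (_ : b ∈ Finset.univ) => (l2 b).symm]
    have inner : ∀ b : Fin n → ZMod q,
        ∑ a ∈ Finset.univ.filter (fun a => hammingDist b a = 1),
            (starRingEnd ℂ) (chr q n a γ)
          = ν * (starRingEnd ℂ) (chr q n b γ) := by
      intro b
      rw [Finset.sum_congr rfl fun a _ => conj_chr q n a γ,
        sum_chr_neighbors q n (-γ) b, supp_neg, ← conj_chr q n b γ, hν]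
    rw [ftr, Finset.mul_sum]
    exact Finset.sum_congr rfl fun b _ => by rw [inner b]; ring
  have h0 : (μ - ν) * ftr q n f γ = 0 := by rw [sub_mul, key, sub_self]
  have hsub : μ - ν ≠ 0 := by
    have hexp : μ - ν = (q : ℂ) * (((supp q n γ).card : ℂ) - (h : ℂ)) := by
      rw [hμ, hν]; ring
    rw [hexp]
    refine mul_ne_zero (Nat.cast_ne_zero.2 (NeZero.ne q)) (sub_ne_zero.2 ?_)
    exact fun hc => hγ (Nat.cast_injective hc)
  exact (mul_eq_zero.1 h0).resolve_left hsub

lemma lwe_chr (q n : ℕ) [NeZero q] (γ : Fin n → ZMod q) (I : Finset (Fin n))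
    (α : Fin n → ZMod q) (x y : ℂ) :
    lwe q n (chr q n γ) I α x y
      = chr q n γ α * (x + ((q : ℂ) - 1) * y) ^ (I.card - (I ∩ supp q n γ).card)
          * (x - y) ^ ((I ∩ supp q n γ).card) := by
  classical
  -- Step A/B : rewrite each term of the lwe as a product over I
  have stepA : ∀ β ∈ face q n I α,
      chr q n γ β * y ^ hammingDist β α * x ^ (I.card - hammingDist β α)
        = chr q n γ β * ∏ j ∈ I, (if β j = α j then x else y) := by
    intro β hβ
    have hface : ∀ j ∉ I, β j = α j := (Finset.mem_filter.1 hβ).2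
    have hfilter : (Finset.univ.filter fun j => β j ≠ α j)
        = I.filter fun j => β j ≠ α j := by
      ext j
      simp only [Finset.mem_filter, Finset.mem_univ, true_and]
      exact ⟨fun hne => ⟨by by_contra hj; exact hne (hface j hj), hne⟩, fun hp => hp.2⟩
    have hd : hammingDist β α = (I.filter fun j => β j ≠ α j).card := by
      rw [hammingDist, hfilter]
    have hsplit := Finset.card_filter_add_card_filter_not
      (s := I) (p := fun j => β j = α j)
    have heqfilters : (I.filter fun j => ¬ β j = α j) = I.filter fun j => β j ≠ α j := rfl
    rw [heqfilters] at hsplit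
    have hprod : ∏ j ∈ I, (if β j = α j then x else y)
        = x ^ (I.filter fun j => β j = α j).card * y ^ (I.filter fun j => β j ≠ α j).card := by
      rw [Finset.prod_ite]
      simp [Finset.prod_const]
    rw [hprod, hd]
    have hcard : (I.filter fun j => β j = α j).card
        = I.card - (I.filter fun j => β j ≠ α j).card := by omega
    rw [hcard]
    ring
  rw [lwe, Finset.sum_congr rfl stepA]
  -- Step C : parametrize the face by functions on I
  set Φ : (↥I → ZMod q) → (Fin n → ZMod q) :=
    fun δ j => α j + if hj : j ∈ I then δ ⟨j, hj⟩ else 0 with hΦ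
  have stepC : ∑ β ∈ face q n I α, chr q n γ β * ∏ j ∈ I, (if β j = α j then x else y)
      = ∑ δ : ↥I → ZMod q, chr q n γ α *
          ∏ i : ↥I, (ec q (δ i * γ i.1) * (if δ i = 0 then x else y)) := by
    refine (Finset.sum_nbij' (fun δ => Φ δ) (fun β => fun i => β i.1 - α i.1)
      ?_ ?_ ?_ ?_ ?_).symm
    · intro δ _
      refine Finset.mem_filter.2 ⟨Finset.mem_univ _, fun j hj => ?_⟩
      simp [hΦ, dif_neg hj]
    · intro β _; exact Finset.mem_univ _
    · intro δ _
      funext i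
      simp only [hΦ, dif_pos i.2]
      simp
    · intro β hβ
      have hface : ∀ j ∉ I, β j = α j := (Finset.mem_filter.1 hβ).2
      funext j
      by_cases hj : j ∈ I
      · simp [hΦ, dif_pos hj]
      · simp [hΦ, dif_neg hj, (hface j hj).symm]
    · intro δ _
      -- chr part
      have hchr : chr q n γ (Φ δ) = chr q n γ α * ∏ i : ↥I, ec q (δ i * γ i.1) := by
        rw [chr_eq, chr_eq]
        have hsum : (∑ j, Φ δ j * γ j)
            = (∑ j, α j * γ j) + ∑ i : ↥I, δ i * γ i.1 := by
          have hterm : ∀ j : Fin n, Φ δ j * γ j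
              = α j * γ j + (if hj : j ∈ I then δ ⟨j, hj⟩ else 0) * γ j := by
            intro j; rw [hΦ]; ring
          rw [Finset.sum_congr rfl fun j _ => hterm j, Finset.sum_add_distrib]
          congr 1
          have hzero : ∀ j ∈ Finset.univ, j ∉ I →
              (if hj : j ∈ I then δ ⟨j, hj⟩ else 0) * γ j = 0 := by
            intro j _ hj; rw [dif_neg hj, zero_mul]
          rw [← Finset.sum_subset (Finset.subset_univ I) hzero]
          rw [Finset.univ_eq_attach, ← Finset.sum_attach I
            (fun j => (if hj : j ∈ I then δ ⟨j, hj⟩ else 0) * γ j)]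
          exact Finset.sum_congr rfl fun i _ => by rw [dif_pos i.2]
        rw [hsum, ec_add]
        congr 1
        rw [ec_sum]
      -- weight part
      have hwt : (∏ j ∈ I, if Φ δ j = α j then x else y)
          = ∏ i : ↥I, (if δ i = 0 then x else y) := by
        rw [Finset.univ_eq_attach, ← Finset.prod_attach I
          (fun j => if Φ δ j = α j then x else y)]
        refine Finset.prod_congr rfl fun i _ => ?_
        have : Φ δ i.1 = α i.1 ↔ δ i = 0 := by
          rw [hΦ]
          simp only [dif_pos i.2]
          exact add_eq_left
        by_cases hz : δ i = 0
        · rw [if_pos (this.2 hz), if_pos hz]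
        · rw [if_neg (fun hc => hz (this.1 hc)), if_neg hz]
      rw [hchr, hwt, Finset.prod_mul_distrib]
      ring
  rw [stepC]
  -- Step D : exchange sum and product
  have stepD : ∑ δ : ↥I → ZMod q, chr q n γ α *
        ∏ i : ↥I, (ec q (δ i * γ i.1) * (if δ i = 0 then x else y))
      = chr q n γ α * ∏ i : ↥I,
          ∑ t : ZMod q, (ec q (t * γ i.1) * (if t = 0 then x else y)) := by
    rw [← Finset.mul_sum]
    congr 1
    rw [Finset.prod_univ_sum (fun _ => (Finset.univ : Finset (ZMod q)))
      (fun (i : ↥I) (t : ZMod q) => ec q (t * γ i.1) * (if t = 0 then x else y)),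
      Fintype.piFinset_univ]
  rw [stepD]
  -- Step E : evaluate the inner sums
  have stepE : ∀ i : ↥I,
      ∑ t : ZMod q, (ec q (t * γ i.1) * (if t = 0 then x else y))
        = if γ i.1 = 0 then x + ((q : ℂ) - 1) * y else x - y := by
    intro i
    have hsplit : ∑ t : ZMod q, (ec q (t * γ i.1) * (if t = 0 then x else y))
        = ec q (0 * γ i.1) * x +
            ∑ t ∈ Finset.univ.erase 0, ec q (t * γ i.1) * y := by
      rw [← Finset.add_sum_erase _ _ (Finset.mem_univ (0 : ZMod q))]
      simp only [if_pos rfl]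
      congr 1
      refine Finset.sum_congr rfl fun t ht => ?_
      rw [if_neg (Finset.mem_erase.1 ht).1]
    rw [hsplit, zero_mul, ec_zero, one_mul, ← Finset.sum_mul,
      Finset.sum_erase_eq_sub (Finset.mem_univ (0 : ZMod q)), sum_ec,
      zero_mul, ec_zero]
    by_cases hz : γ i.1 = 0
    · rw [if_pos hz, if_pos hz]
    · rw [if_neg hz, if_neg hz]; ring
  rw [Finset.prod_congr rfl fun i _ => stepE i]
  -- Step F : count the two kinds of factors
  have hw : (I ∩ supp q n γ).card ≤ I.card :=
    Finset.card_le_card Finset.inter_subset_left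
  have hsupp : (I.filter fun j => ¬ γ j = 0) = I ∩ supp q n γ := by
    ext j; simp [supp, Finset.mem_inter, Finset.mem_filter, and_comm]
  have hsplit := Finset.card_filter_add_card_filter_not
    (s := I) (p := fun j => γ j = 0)
  rw [hsupp] at hsplit
  have hF : ∏ i : ↥I, (if γ i.1 = 0 then x + ((q : ℂ) - 1) * y else x - y)
      = (x + ((q : ℂ) - 1) * y) ^ (I.card - (I ∩ supp q n γ).card)
          * (x - y) ^ ((I ∩ supp q n γ).card) := by
    rw [Finset.univ_eq_attach, Finset.prod_attach I
      (fun j => if γ j = 0 then x + ((q : ℂ) - 1) * y else x - y)]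
    rw [Finset.prod_ite]
    simp only [Finset.prod_const]
    rw [hsupp]
    congr 2
    omega
  rw [hF, mul_assoc]

lemma lwe_expand (q n : ℕ) [NeZero q] (f : (Fin n → ZMod q) → ℂ)
    (I : Finset (Fin n)) (α : Fin n → ZMod q) (x y : ℂ) :
    (q : ℂ) ^ n * lwe q n f I α x y
      = ∑ γ : Fin n → ZMod q, ftr q n f γ * lwe q n (chr q n γ) I α x y := by
  classical
  rw [lwe, Finset.mul_sum]
  have step : ∀ β ∈ face q n I α,
      (q : ℂ) ^ n * (f β * y ^ hammingDist β α * x ^ (I.card - hammingDist β α))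
        = ∑ γ : Fin n → ZMod q, ftr q n f γ *
            (chr q n γ β * y ^ hammingDist β α * x ^ (I.card - hammingDist β α)) := by
    intro β _
    have h1 : (q : ℂ) ^ n * (f β * y ^ hammingDist β α * x ^ (I.card - hammingDist β α))
        = ((q : ℂ) ^ n * f β) *
            (y ^ hammingDist β α * x ^ (I.card - hammingDist β α)) := by ring
    rw [h1, ← inversion q n f β, Finset.sum_mul]
    exact Finset.sum_congr rfl fun γ _ => by ring
  rw [Finset.sum_congr rfl step, Finset.sum_comm]
  refine Finset.sum_congr rfl fun γ _ => ?_
  rw [lwe, Finset.mul_sum]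

/-- Theorem 1, with the negative exponents cleared:
`(x+(q-1)y)^{h-|Ī|} g^{Ī,α}_f(x,y) = (x'+(q-1)y')^{h-|I|} g^{I,α}_f(x',y')`,
where `x' = x+(q-2)y`, `y' = -y`, multiplied through by
`(x+(q-1)y)^{|Ī|} (x'+(q-1)y')^{|I|}`. -/
theorem stmt_7 (q n : ℕ) [NeZero q] (hq : 2 ≤ q) (h : ℕ) (hh : h ≤ n)
    (f : (Fin n → ZMod q) → ℂ)
    (hf : IsEigenfun q n f (((q : ℂ) - 1) * n - (q : ℂ) * h))
    (α : Fin n → ZMod q) (I : Finset (Fin n)) (x y : ℂ) :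
    (x + ((q : ℂ) - 1) * y) ^ h *
      ((x + ((q : ℂ) - 2) * y) + ((q : ℂ) - 1) * (-y)) ^ I.card *
      lwe q n f Iᶜ α x y
    = ((x + ((q : ℂ) - 2) * y) + ((q : ℂ) - 1) * (-y)) ^ h *
        (x + ((q : ℂ) - 1) * y) ^ Iᶜ.card *
        lwe q n f I α (x + ((q : ℂ) - 2) * y) (-y) := by
  classical
  have hqn : ((q : ℂ)) ^ n ≠ 0 := pow_ne_zero _ (Nat.cast_ne_zero.2 (NeZero.ne q))
  apply mul_left_cancel₀ hqn
  have hL : (q : ℂ) ^ n * ((x + ((q : ℂ) - 1) * y) ^ h *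
        ((x + ((q : ℂ) - 2) * y) + ((q : ℂ) - 1) * (-y)) ^ I.card * lwe q n f Iᶜ α x y)
      = (x + ((q : ℂ) - 1) * y) ^ h *
          ((x + ((q : ℂ) - 2) * y) + ((q : ℂ) - 1) * (-y)) ^ I.card *
          ((q : ℂ) ^ n * lwe q n f Iᶜ α x y) := by ring
  have hR : (q : ℂ) ^ n * (((x + ((q : ℂ) - 2) * y) + ((q : ℂ) - 1) * (-y)) ^ h *
        (x + ((q : ℂ) - 1) * y) ^ Iᶜ.card * lwe q n f I α (x + ((q : ℂ) - 2) * y) (-y))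
      = ((x + ((q : ℂ) - 2) * y) + ((q : ℂ) - 1) * (-y)) ^ h *
          (x + ((q : ℂ) - 1) * y) ^ Iᶜ.card *
          ((q : ℂ) ^ n * lwe q n f I α (x + ((q : ℂ) - 2) * y) (-y)) := by ring
  rw [hL, hR, lwe_expand, lwe_expand, Finset.mul_sum, Finset.mul_sum]
  refine Finset.sum_congr rfl fun γ _ => ?_
  by_cases hγ : (supp q n γ).card = h
  · -- main case : the character has weight h
    set s := supp q n γ with hs
    set wI := (I ∩ s).card with hwI
    set wc := (Iᶜ ∩ s).card with hwc
    have hsum : wI + wc = h := by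
      have hunion : (I ∩ s) ∪ (Iᶜ ∩ s) = s := by
        rw [← Finset.union_inter_distrib_right, Finset.union_compl, Finset.univ_inter]
      have hdisj : Disjoint (I ∩ s) (Iᶜ ∩ s) :=
        disjoint_compl_right.mono Finset.inter_subset_left Finset.inter_subset_left
      have := Finset.card_union_of_disjoint hdisj
      rw [hunion] at this
      rw [hwI, hwc, ← this, hγ]
    have hwIle : wI ≤ I.card := Finset.card_le_card Finset.inter_subset_left
    have hwcle : wc ≤ Iᶜ.card := Finset.card_le_card Finset.inter_subset_left
    rw [lwe_chr, lwe_chr]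
    have hB : ((x + ((q : ℂ) - 2) * y) + ((q : ℂ) - 1) * (-y)) = x - y := by ring
    have hA2 : ((x + ((q : ℂ) - 2) * y) - (-y)) = x + ((q : ℂ) - 1) * y := by ring
    rw [hB, hA2]
    have e1 : h + (Iᶜ.card - wc) = Iᶜ.card + wI := by omega
    have e2 : I.card + wc = h + (I.card - wI) := by omega
    calc (x + ((q : ℂ) - 1) * y) ^ h * (x - y) ^ I.card *
          (ftr q n f γ * (chr q n γ α *
            (x + ((q : ℂ) - 1) * y) ^ (Iᶜ.card - wc) * (x - y) ^ wc))
        = ftr q n f γ * chr q n γ α *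
            ((x + ((q : ℂ) - 1) * y) ^ (h + (Iᶜ.card - wc)) *
              (x - y) ^ (I.card + wc)) := by
          rw [pow_add, pow_add]; ring
      _ = ftr q n f γ * chr q n γ α *
            ((x + ((q : ℂ) - 1) * y) ^ (Iᶜ.card + wI) *
              (x - y) ^ (h + (I.card - wI))) := by rw [e1, e2]
      _ = (x - y) ^ h * (x + ((q : ℂ) - 1) * y) ^ Iᶜ.card *
            (ftr q n f γ * (chr q n γ α *
              (x - y) ^ (I.card - wI) * (x + ((q : ℂ) - 1) * y) ^ wI)) := by
          rw [pow_add, pow_add]; ring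
  · rw [ftr_vanish q n hq h f hf γ hγ, zero_mul, mul_zero, zero_mul, mul_zero]
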